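/- Let f lie on a freeway h with speed v > 1. For every R > 0, the ball B_h(f,R) = {p ∈ ℝ² : d_h(p,f) ≤ R} is a convex set. -/
import Mathlib


noncomputable def n1 (p : ℝ × ℝ) : ℝ := |p.1| + |p.2|
noncomputable def n2 (p : ℝ × ℝ) : ℝ := Real.sqrt (p.1 ^ 2 + p.2 ^ 2)

noncomputable def dfree (a b : ℝ × ℝ) (v : ℝ) (p f : ℝ × ℝ) : ℝ :=
  min (n1 (p - f))
    (sInf {c : ℝ | ∃ q₁ ∈ segment ℝ a b, ∃ q₂ ∈ segment ℝ a b,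
      c = n1 (p - q₁) + n2 (q₁ - q₂) / v + n1 (q₂ - f)})

lemma n1_nonneg (p : ℝ × ℝ) : 0 ≤ n1 p := add_nonneg (abs_nonneg _) (abs_nonneg _)

lemma n2_nonneg (p : ℝ × ℝ) : 0 ≤ n2 p := Real.sqrt_nonneg _

lemma n1_conv {t s : ℝ} (ht : 0 ≤ t) (hs : 0 ≤ s) (u w : ℝ × ℝ) :
    n1 (t • u + s • w) ≤ t * n1 u + s * n1 w := by
  simp only [n1, Prod.fst_add, Prod.snd_add, Prod.smul_fst, Prod.smul_snd, smul_eq_mul]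
  have h1 := abs_add_le (t * u.1) (s * w.1)
  have h2 := abs_add_le (t * u.2) (s * w.2)
  rw [abs_mul, abs_mul, abs_of_nonneg ht, abs_of_nonneg hs] at h1 h2
  linarith

lemma n2_conv {t s : ℝ} (ht : 0 ≤ t) (hs : 0 ≤ s) (u w : ℝ × ℝ) :
    n2 (t • u + s • w) ≤ t * n2 u + s * n2 w := by
  simp only [n2, Prod.fst_add, Prod.snd_add, Prod.smul_fst, Prod.smul_snd, smul_eq_mul]
  have hu := Real.sq_sqrt (show (0:ℝ) ≤ u.1 ^ 2 + u.2 ^ 2 by positivity)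
  have hw := Real.sq_sqrt (show (0:ℝ) ≤ w.1 ^ 2 + w.2 ^ 2 by positivity)
  have hU := Real.sqrt_nonneg (u.1 ^ 2 + u.2 ^ 2)
  have hW := Real.sqrt_nonneg (w.1 ^ 2 + w.2 ^ 2)
  have cauchy : u.1 * w.1 + u.2 * w.2 ≤
      Real.sqrt (u.1 ^ 2 + u.2 ^ 2) * Real.sqrt (w.1 ^ 2 + w.2 ^ 2) := by
    nlinarith [sq_nonneg (u.1 * w.2 - u.2 * w.1), mul_nonneg hU hW, hu, hw]
  have key : (t * u.1 + s * w.1) ^ 2 + (t * u.2 + s * w.2) ^ 2 ≤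
      (t * Real.sqrt (u.1 ^ 2 + u.2 ^ 2) + s * Real.sqrt (w.1 ^ 2 + w.2 ^ 2)) ^ 2 := by
    have hmul := mul_le_mul_of_nonneg_left cauchy (mul_nonneg ht hs)
    have expand : (t * Real.sqrt (u.1 ^ 2 + u.2 ^ 2) + s * Real.sqrt (w.1 ^ 2 + w.2 ^ 2)) ^ 2 =
        t ^ 2 * Real.sqrt (u.1 ^ 2 + u.2 ^ 2) ^ 2 +
        2 * (t * s) * (Real.sqrt (u.1 ^ 2 + u.2 ^ 2) * Real.sqrt (w.1 ^ 2 + w.2 ^ 2)) +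
        s ^ 2 * Real.sqrt (w.1 ^ 2 + w.2 ^ 2) ^ 2 := by ring
    rw [expand, hu, hw]
    nlinarith [hmul]
  calc Real.sqrt ((t * u.1 + s * w.1) ^ 2 + (t * u.2 + s * w.2) ^ 2)
      ≤ Real.sqrt ((t * Real.sqrt (u.1 ^ 2 + u.2 ^ 2) +
          s * Real.sqrt (w.1 ^ 2 + w.2 ^ 2)) ^ 2) := Real.sqrt_le_sqrt key
    _ = _ := Real.sqrt_sq (by positivity)

theorem stmt16 (a b f : ℝ × ℝ) (v : ℝ) (hv : 1 < v) (hf : f ∈ segment ℝ a b)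
    (R : ℝ) (hR : 0 < R) :
    Convex ℝ {p : ℝ × ℝ | dfree a b v p f ≤ R} := by
  have hv0 : (0:ℝ) < v := lt_trans one_pos hv
  set S : (ℝ × ℝ) → Set ℝ := fun p => {c : ℝ | ∃ q₁ ∈ segment ℝ a b, ∃ q₂ ∈ segment ℝ a b,
      c = n1 (p - q₁) + n2 (q₁ - q₂) / v + n1 (q₂ - f)} with hSdef
  have hne : ∀ p, (S p).Nonempty := fun p => ⟨_, f, hf, f, hf, rfl⟩
  have hbd : ∀ p, BddBelow (S p) := by
    intro p
    refine ⟨0, ?_⟩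
    rintro c ⟨q₁, _, q₂, _, rfl⟩
    have h1 := n1_nonneg (p - q₁)
    have h2 : 0 ≤ n2 (q₁ - q₂) / v := div_nonneg (n2_nonneg _) hv0.le
    have h3 := n1_nonneg (q₂ - f)
    linarith
  have hiff : ∀ p, dfree a b v p f ≤ R ↔ sInf (S p) ≤ R := by
    intro p
    unfold dfree
    constructor
    · intro h
      rcases min_le_iff.mp h with h | h
      · refine le_trans (csInf_le (hbd p) ?_) h
        exact ⟨f, hf, f, hf, by simp [n1, n2]⟩
      · exact h
    · intro h
      exact le_trans (min_le_right _ _) h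
  intro x hx y hy t s ht hs hts
  simp only [Set.mem_setOf_eq, hiff] at hx hy ⊢
  refine le_of_forall_pos_le_add ?_
  intro ε hε
  obtain ⟨c, ⟨q₁, hq₁, q₂, hq₂, hc⟩, hcR⟩ :=
    exists_lt_of_csInf_lt (hne x) (lt_of_le_of_lt hx (by linarith : R < R + ε))
  obtain ⟨c', ⟨r₁, hr₁, r₂, hr₂, hc'⟩, hcR'⟩ :=
    exists_lt_of_csInf_lt (hne y) (lt_of_le_of_lt hy (by linarith : R < R + ε))
  have hm₁ : t • q₁ + s • r₁ ∈ segment ℝ a b := (convex_segment a b) hq₁ hr₁ ht hs hts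
  have hm₂ : t • q₂ + s • r₂ ∈ segment ℝ a b := (convex_segment a b) hq₂ hr₂ ht hs hts
  have hfcomb : f = t • f + s • f := by rw [← add_smul, hts, one_smul]
  have e1 : (t • x + s • y) - (t • q₁ + s • r₁) = t • (x - q₁) + s • (y - r₁) := by
    module
  have e2 : (t • q₁ + s • r₁) - (t • q₂ + s • r₂) = t • (q₁ - q₂) + s • (r₁ - r₂) := by
    module
  have e3 : (t • q₂ + s • r₂) - f = t • (q₂ - f) + s • (r₂ - f) := by
    have h4 : (t + s) • f = f := by rw [hts, one_smul]
    calc (t • q₂ + s • r₂) - f = (t • q₂ + s • r₂) - (t + s) • f := by rw [h4]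
      _ = t • (q₂ - f) + s • (r₂ - f) := by module
  have hval : n1 ((t • x + s • y) - (t • q₁ + s • r₁)) +
      n2 ((t • q₁ + s • r₁) - (t • q₂ + s • r₂)) / v +
      n1 ((t • q₂ + s • r₂) - f) ≤ t * c + s * c' := by
    rw [e1, e2, e3]
    have b1 := n1_conv ht hs (x - q₁) (y - r₁)
    have b2 := n2_conv ht hs (q₁ - q₂) (r₁ - r₂)
    have b3 := n1_conv ht hs (q₂ - f) (r₂ - f)
    have b2' : n2 (t • (q₁ - q₂) + s • (r₁ - r₂)) / v ≤
        t * (n2 (q₁ - q₂) / v) + s * (n2 (r₁ - r₂) / v) := by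
      rw [← mul_div_assoc, ← mul_div_assoc, ← add_div]
      exact div_le_div_of_nonneg_right b2 hv0.le
    calc n1 (t • (x - q₁) + s • (y - r₁)) +
        n2 (t • (q₁ - q₂) + s • (r₁ - r₂)) / v + n1 (t • (q₂ - f) + s • (r₂ - f))
        ≤ (t * n1 (x - q₁) + s * n1 (y - r₁)) +
          (t * (n2 (q₁ - q₂) / v) + s * (n2 (r₁ - r₂) / v)) +
          (t * n1 (q₂ - f) + s * n1 (r₂ - f)) := add_le_add (add_le_add b1 b2') b3
      _ = t * c + s * c' := by rw [hc, hc']; ring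
  have hcomb : t * c + s * c' ≤ R + ε := by
    have h1 := mul_le_mul_of_nonneg_left hcR.le ht
    have h2 := mul_le_mul_of_nonneg_left hcR'.le hs
    have h3 : t * (R + ε) + s * (R + ε) = R + ε := by rw [← add_mul, hts, one_mul]
    linarith
  exact le_trans (csInf_le (hbd _) ⟨_, hm₁, _, hm₂, rfl⟩) (le_trans hval hcomb)
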